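/- Let G be a DAG, D a proper path of G (length ≥ 2 vertices), and 𝒫 a path cover of G such that every edge of D is contained in some path of 𝒫. Then there exists a path cover 𝒫' of G with |𝒫'| = |𝒫|, containing a path that has D as a subpath, and such that every edge of G has the same multiplicity with respect to 𝒫' as with respect to 𝒫. -/

import Mathlib

open Finset

section Prelude

variable {V : Type*}

/-- A (directed) path in the graph with edge relation `E`: nonempty, consecutive
vertices joined by edges, and vertices pairwise distinct. -/
def IsPathOn (E : V → V → Prop) (p : List V) : Prop :=
  p ≠ [] ∧ p.Chain' E ∧ p.Nodup

/-- Reachability in the graph with edge relation `E`. -/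
def Reaches (E : V → V → Prop) : V → V → Prop := Relation.ReflTransGen E

/-- The edges of a path, as the list of consecutive pairs of vertices. -/
def pathEdges (p : List V) : List (V × V) := p.zip p.tail

/-- A path cover: a multiset of paths such that every vertex is on some path. -/
def IsPathCover (E : V → V → Prop) (P : Multiset (List V)) : Prop :=
  (∀ p ∈ P, IsPathOn E p) ∧ ∀ v : V, ∃ p ∈ P, v ∈ p

/-- The width of a graph: the minimum size of a path cover. -/
noncomputable def gwidth (E : V → V → Prop) : ℕ :=
  sInf {n | ∃ P : Multiset (List V), IsPathCover E P ∧ Multiset.card P = n}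

/-- A DAG: no proper (directed) cycles. -/
def IsDAG (E : V → V → Prop) : Prop := ∀ v, ¬ Relation.TransGen E v v

/-- The edge relation of a finite edge set. -/
def edgeRel (E : Finset (V × V)) : V → V → Prop := fun a b => (a, b) ∈ E

/-- Multiplicity of an edge with respect to a multiset of paths. -/
def mult [DecidableEq V] (P : Multiset (List V)) (e : V × V) : ℕ :=
  Multiset.countP (fun p => e ∈ pathEdges p) P

/-- A flow network: a finite edge set, source, sink, and lower bounds (demands). -/
structure FlowNet (V : Type*) where
  E : Finset (V × V)
  s : V
  t : V
  d : V × V → ℕ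

/-- A flow: supported on edges, satisfying the demands, and flow conservation at
every vertex other than the source and the sink. -/
def IsFlow [Fintype V] (N : FlowNet V) (f : V × V → ℕ) : Prop :=
  (∀ e, e ∉ N.E → f e = 0) ∧ (∀ e ∈ N.E, N.d e ≤ f e) ∧
  ∀ v : V, v ≠ N.s → v ≠ N.t → (∑ u : V, f (u, v)) = ∑ u : V, f (v, u)

/-- The size of a flow: net outflow at the source. -/
def flowSize [Fintype V] (N : FlowNet V) (f : V × V → ℕ) : ℤ :=
  (∑ u : V, (f (N.s, u) : ℤ)) - ∑ u : V, (f (u, N.s) : ℤ)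

/-- An `st`-cut, given by the source side `S` (the sink side is the complement). -/
def IsCut (N : FlowNet V) (S : Set V) : Prop := N.s ∈ S ∧ N.t ∉ S

/-- A one-way cut: a cut with no edge crossing from `T = Sᶜ` to `S`. -/
def IsOwCut (N : FlowNet V) (S : Set V) : Prop :=
  IsCut N S ∧ ∀ e ∈ N.E, e.1 ∉ S → e.2 ∉ S

open Classical in
/-- The demand of a cut: sum of demands of edges crossing from `S` to `T`. -/
noncomputable def cutDemand (N : FlowNet V) (S : Set V) : ℕ :=
  ∑ e ∈ N.E.filter (fun e => e.1 ∈ S ∧ e.2 ∉ S), N.d e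

open Classical in
/-- The net flow across a cut: flow from `S` to `T` minus flow from `T` to `S`. -/
noncomputable def cutFlow (N : FlowNet V) (S : Set V) (f : V × V → ℕ) : ℤ :=
  (∑ e ∈ N.E.filter (fun e => e.1 ∈ S ∧ e.2 ∉ S), (f e : ℤ))
    - ∑ e ∈ N.E.filter (fun e => e.1 ∉ S ∧ e.2 ∈ S), (f e : ℤ)

/-- The residual graph of a network w.r.t. a flow `f`: reverse edges of all edges,
plus the edges whose flow strictly exceeds the demand. -/
def ResidualEdge (N : FlowNet V) (f : V × V → ℕ) (u v : V) : Prop :=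
  (v, u) ∈ N.E ∨ ((u, v) ∈ N.E ∧ N.d (u, v) < f (u, v))

/-- Vertices of the flow reduction: two copies of each vertex, plus source/sink. -/
abbrev FR (V : Type*) := (V ⊕ V) ⊕ Bool

def vinF (v : V) : FR V := Sum.inl (Sum.inl v)
def voutF (v : V) : FR V := Sum.inl (Sum.inr v)
def fsrc : FR V := Sum.inr false
def fsnk : FR V := Sum.inr true

/-- Demands of the flow reduction: `1` on each edge `(vin v, vout v)`, else `0`. -/
def redD [DecidableEq V] : FR V × FR V → ℕ
  | (Sum.inl (Sum.inl a), Sum.inl (Sum.inr b)) => if a = b then 1 else 0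
  | _ => 0

/-- The flow reduction of the DAG with edge set `E`. -/
def redNet [Fintype V] [DecidableEq V] (E : Finset (V × V)) : FlowNet (FR V) where
  E := (univ.image fun v : V => (fsrc, vinF v)) ∪ (univ.image fun v : V => (voutF v, fsnk))
        ∪ (univ.image fun v : V => (vinF v, voutF v))
        ∪ (E.image fun e => (voutF e.1, vinF e.2))
  s := fsrc
  t := fsnk
  d := redD

/-- The layered cut `L^{≤ l}`: the source together with all split vertices of level `≤ l`. -/
def layerCut (ℓ : FR V → ℤ) (l : ℤ) : Set (FR V) :=
  {x | x = fsrc ∨ ((∃ v : V, x = vinF v ∨ x = voutF v) ∧ ℓ x ≤ l)}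

open Classical in
/-- The layered antichain `A^l`. -/
noncomputable def layerAntichain [Fintype V] (ℓ : FR V → ℤ) (l : ℤ) : Finset V :=
  univ.filter (fun v => ℓ (vinF v) ≤ l ∧ l < ℓ (voutF v))

end Prelude

section Aux

variable {V : Type*}

namespace Stmt11Aux

lemma pathEdges_cons₂ (a b : V) (l : List V) :
    pathEdges (a :: b :: l) = (a, b) :: pathEdges (b :: l) := rfl

lemma pathEdges_nil : pathEdges ([] : List V) = [] := rfl
lemma pathEdges_single (a : V) : pathEdges [a] = [] := rfl

lemma mem_of_mem_pathEdges {e : V × V} {p : List V} (h : e ∈ pathEdges p) :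
    e.1 ∈ p ∧ e.2 ∈ p := by
  obtain ⟨x, y⟩ := e
  have := List.of_mem_zip h
  exact ⟨this.1, List.mem_of_mem_tail this.2⟩

lemma pathEdges_split (l r : List V) (x : V) :
    pathEdges (l ++ x :: r) = pathEdges (l ++ [x]) ++ pathEdges (x :: r) := by
  induction l with
  | nil => simp [pathEdges_single]
  | cons a l ih =>
    cases l with
    | nil => simp [pathEdges_cons₂, pathEdges_single]
    | cons b l => simpa [pathEdges_cons₂] using ih

lemma mem_pathEdges_iff {x y : V} {p : List V} :
    (x, y) ∈ pathEdges p ↔ ∃ l r, p = l ++ x :: y :: r := by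
  constructor
  · intro h
    induction p with
    | nil => simp [pathEdges_nil] at h
    | cons a t ih =>
      cases t with
      | nil => simp [pathEdges_single] at h
      | cons b t =>
        rw [pathEdges_cons₂, List.mem_cons] at h
        rcases h with h | h
        · exact ⟨[], t, by simp_all⟩
        · obtain ⟨l, r, hlr⟩ := ih h
          exact ⟨a :: l, r, by simp [hlr]⟩
  · rintro ⟨l, r, rfl⟩
    rw [pathEdges_split l (y :: r) x]
    simp [pathEdges_cons₂]

lemma nodup_pathEdges {p : List V} (h : p.Nodup) : (pathEdges p).Nodup := by
  induction p with
  | nil => simp [pathEdges_nil]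
  | cons a t ih =>
    cases t with
    | nil => simp [pathEdges_single]
    | cons b t =>
      rw [pathEdges_cons₂]
      refine List.nodup_cons.2 ⟨?_, ih h.of_cons⟩
      intro hmem
      exact (List.nodup_cons.1 h).1 (mem_of_mem_pathEdges hmem).1

lemma reaches_of_chain {E : V → V → Prop} :
    ∀ {a : V} {l : List V} {x : V}, List.Chain E a l → x ∈ a :: l →
      Relation.ReflTransGen E a x := by
  intro a l
  induction l generalizing a with
  | nil => intro x _ hx; simp at hx; subst hx; exact .refl
  | cons b l ih =>
    intro x hc hx
    rcases List.mem_cons.1 hx with rfl | hx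
    · exact .refl
    · rcases List.chain_cons.1 hc with ⟨hab, hc'⟩
      exact (Relation.ReflTransGen.single hab).trans (ih hc' hx)

lemma reaches_head {E : V → V → Prop} {a : V} {l : List V} {x : V}
    (hc : List.Chain' E (a :: l)) (hx : x ∈ a :: l) :
    Relation.ReflTransGen E a x :=
  reaches_of_chain hc hx

lemma reaches_last {E : V → V → Prop} {l : List V} {u : V} {x : V}
    (hc : List.Chain' E (l ++ [u])) (hx : x ∈ l ++ [u]) :
    Relation.ReflTransGen E x u := by
  have hc' : List.Chain' (flip E) ((l ++ [u]).reverse) := List.isChain_reverse.2 hc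
  rw [List.reverse_append] at hc'
  simp only [List.reverse_singleton, List.singleton_append] at hc'
  have := reaches_head hc' (x := x)
    (by simp only [List.mem_cons, List.mem_reverse]; simp at hx; tauto)
  exact (Relation.reflTransGen_swap.2 this : _)

lemma nodup_split_unique {u : V} :
    ∀ {s t s' t' : List V}, (s ++ u :: t).Nodup → s ++ u :: t = s' ++ u :: t' →
      s = s' ∧ t = t' := by
  intro s
  induction s with
  | nil =>
    intro t s' t' hnd heq
    cases s' with
    | nil => simpa using heq
    | cons a s' =>
      simp only [List.nil_append, List.cons_append, List.cons.injEq] at heq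
      obtain ⟨rfl, heq⟩ := heq
      have : u ∈ t := heq ▸ (by simp)
      exact absurd this (List.nodup_cons.1 hnd).1
  | cons a s ih =>
    intro t s' t' hnd heq
    cases s' with
    | nil =>
      simp only [List.nil_append, List.cons_append, List.cons.injEq] at heq
      obtain ⟨rfl, heq⟩ := heq
      have hmem : a ∈ s ++ a :: t := by simp
      have hnd' : (a :: (s ++ a :: t)).Nodup := by simpa using hnd
      exact absurd hmem (List.nodup_cons.1 hnd').1
    | cons b s' =>
      simp only [List.cons_append, List.cons.injEq] at heq
      obtain ⟨rfl, heq⟩ := heq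
      have := ih (List.nodup_cons.1 (by simpa using hnd)).2 heq
      exact ⟨by rw [this.1], this.2⟩

lemma splice {E : V → V → Prop} (hdag : ∀ v, ¬ Relation.TransGen E v v)
    (a D₁ b c d : List V) (u w : V)
    (hp : IsPathOn E (a ++ (D₁ ++ [u]) ++ b))
    (hq : IsPathOn E (c ++ u :: w :: d)) :
    IsPathOn E (a ++ (D₁ ++ [u]) ++ w :: d) ∧ IsPathOn E (c ++ u :: b) ∧
    (pathEdges (a ++ (D₁ ++ [u]) ++ w :: d) ++ pathEdges (c ++ u :: b)).Perm
      (pathEdges (a ++ (D₁ ++ [u]) ++ b) ++ pathEdges (c ++ u :: w :: d)) ∧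
    ∀ v : V, (v ∈ a ++ (D₁ ++ [u]) ++ w :: d ∨ v ∈ c ++ u :: b) ↔
      (v ∈ a ++ (D₁ ++ [u]) ++ b ∨ v ∈ c ++ u :: w :: d) := by
  obtain ⟨-, hpc, hpn⟩ := hp
  obtain ⟨-, hqc, hqn⟩ := hq
  set D₀ := D₁ ++ [u] with hD₀
  have hpdec : a ++ D₀ ++ b = (a ++ D₀) ++ b := by simp [List.append_assoc]
  have hqdec : c ++ u :: w :: d = (c ++ [u]) ++ w :: d := by simp
  have hcaD : List.Chain' E (a ++ D₀) := hpc.prefix ⟨b, hpdec.symm⟩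
  have hcb : List.Chain' E b := hpc.suffix ⟨a ++ D₀, hpdec.symm⟩
  have hccu : List.Chain' E (c ++ [u]) := hqc.prefix ⟨w :: d, hqdec.symm⟩
  have hcwd : List.Chain' E (w :: d) := hqc.suffix ⟨c ++ [u], hqdec.symm⟩
  have hlastaD : (a ++ D₀).getLast? = some u := by
    rw [hD₀, ← List.append_assoc]; exact List.getLast?_concat
  have hlastcu : (c ++ [u]).getLast? = some u := List.getLast?_concat
  have hjp : ∀ y ∈ b.head?, E u y := by
    rw [hpdec] at hpc
    have := (List.isChain_append.1 hpc).2.2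
    intro y hy; exact this u (by rw [hlastaD]; rfl) y hy
  have hEuw : E u w := by
    rw [hqdec] at hqc
    exact (List.isChain_append.1 hqc).2.2 u (by rw [hlastcu]; rfl) w rfl
  rw [hpdec, List.nodup_append] at hpn
  obtain ⟨hnaD, hnb, hdisp⟩ := hpn
  rw [hqdec, List.nodup_append] at hqn
  obtain ⟨hncu, hnwd, hdisq⟩ := hqn
  have R1 : ∀ x ∈ a ++ D₀, Relation.ReflTransGen E x u := by
    intro x hx
    rw [hD₀, ← List.append_assoc] at hcaD hx
    exact reaches_last hcaD hx
  have R2 : ∀ x ∈ w :: d, Relation.ReflTransGen E w x := fun x hx => reaches_head hcwd hx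
  have R3 : ∀ x ∈ c ++ [u], Relation.ReflTransGen E x u := fun x hx => reaches_last hccu hx
  have R4 : ∀ x ∈ b, Relation.TransGen E u x := by
    intro x hx
    cases b with
    | nil => simp at hx
    | cons h t =>
      exact Relation.TransGen.head' (hjp h rfl) (reaches_head hcb hx)
  have hp' : IsPathOn E (a ++ D₀ ++ w :: d) := by
    refine ⟨by simp, ?_, ?_⟩
    · refine List.isChain_append.2 ?_
      refine ⟨hcaD, hcwd, ?_⟩
      intro x hx y hy
      rw [hlastaD] at hx
      simp only [Option.mem_some_iff, List.head?_cons] at hx hy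
      subst hx; subst hy; exact hEuw
    · rw [List.nodup_append']
      refine ⟨hnaD, hnwd, ?_⟩
      intro x hx hx'
      exact hdag x
        (Relation.TransGen.trans_right (R1 x hx) (Relation.TransGen.head' hEuw (R2 x hx')))
  have hq' : IsPathOn E (c ++ u :: b) := by
    have hdec : c ++ u :: b = (c ++ [u]) ++ b := by simp
    refine ⟨by simp, ?_, ?_⟩
    · rw [hdec]; refine List.isChain_append.2 ?_
      refine ⟨hccu, hcb, ?_⟩
      intro x hx y hy
      rw [hlastcu] at hx
      simp only [Option.mem_some_iff] at hx
      subst hx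
      exact hjp y hy
    · rw [hdec, List.nodup_append']
      refine ⟨hncu, hnb, ?_⟩
      intro x hx hx'
      exact hdag x (Relation.TransGen.trans_right (R3 x hx) (R4 x hx'))
  refine ⟨hp', hq', ?_, by intro v; simp; tauto⟩
  have ep : pathEdges (a ++ D₀ ++ b) = pathEdges (a ++ D₀) ++ pathEdges (u :: b) := by
    have : a ++ D₀ ++ b = (a ++ D₁) ++ u :: b := by simp [hD₀]
    rw [this, pathEdges_split, hD₀, List.append_assoc]
  have ep' : pathEdges (a ++ D₀ ++ w :: d)
      = pathEdges (a ++ D₀) ++ ((u, w) :: pathEdges (w :: d)) := by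
    have : a ++ D₀ ++ w :: d = (a ++ D₁) ++ u :: w :: d := by simp [hD₀]
    rw [this, pathEdges_split, hD₀, List.append_assoc, pathEdges_cons₂]
  have eq1 : pathEdges (c ++ u :: w :: d)
      = pathEdges (c ++ [u]) ++ ((u, w) :: pathEdges (w :: d)) := by
    rw [pathEdges_split, pathEdges_cons₂]
  have eq1' : pathEdges (c ++ u :: b) = pathEdges (c ++ [u]) ++ pathEdges (u :: b) := by
    rw [pathEdges_split]
  rw [ep, ep', eq1, eq1']
  have h : ∀ (l : List (V × V)), (u, w) :: l = [(u, w)] ++ l := fun _ => rfl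
  rw [← Multiset.coe_eq_coe, h (pathEdges (w :: d))]
  simp only [← Multiset.coe_add]
  abel

lemma indicator_eq [DecidableEq V] {A B A' B' : List (V × V)} (hA : A.Nodup) (hB : B.Nodup)
    (hA' : A'.Nodup) (hB' : B'.Nodup) (hperm : (A' ++ B').Perm (A ++ B)) (e : V × V) :
    ((if e ∈ A' then 1 else 0) + if e ∈ B' then 1 else 0)
      = (if e ∈ A then 1 else 0) + if e ∈ B then 1 else 0 := by
  have key : ∀ (L : List (V × V)), L.Nodup →
      Multiset.count e (↑L : Multiset (V × V)) = if e ∈ L then 1 else 0 := by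
    intro L hL
    split
    next hmem => exact Multiset.count_eq_one_of_mem (Multiset.coe_nodup.2 hL) (Multiset.mem_coe.2 hmem)
    next hmem => exact Multiset.count_eq_zero_of_notMem (fun h => hmem (Multiset.mem_coe.1 h))
  have hc := congrArg (Multiset.count e) (Multiset.coe_eq_coe.2 hperm)
  rw [← Multiset.coe_add, ← Multiset.coe_add, Multiset.count_add, Multiset.count_add,
    key A hA, key B hB, key A' hA', key B' hB'] at hc
  exact hc

lemma main_aux [DecidableEq V] (E : V → V → Prop) (hdag : IsDAG E) :
    ∀ n (D : List V), D.length ≤ n → 2 ≤ D.length → IsPathOn E D →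
    ∀ P : Multiset (List V), IsPathCover E P →
    (∀ e ∈ pathEdges D, ∃ p ∈ P, e ∈ pathEdges p) →
    ∃ P' : Multiset (List V), IsPathCover E P' ∧ Multiset.card P' = Multiset.card P ∧
      (∃ p ∈ P', D <:+: p) ∧ ∀ e : V × V, mult P' e = mult P e := by
  intro n
  induction n with
  | zero => intro D h1 h2; omega
  | succ n ih =>
    intro D hlen h2 hD P hP hDP
    by_cases hbase : D.length = 2
    · obtain ⟨x, y, rfl⟩ := List.length_eq_two.1 hbase
      obtain ⟨q, hqP, hq⟩ := hDP (x, y) (by simp [pathEdges_cons₂, pathEdges_single])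
      obtain ⟨l, r, rfl⟩ := mem_pathEdges_iff.1 hq
      exact ⟨P, hP, rfl, ⟨_, hqP, ⟨l, r, by simp⟩⟩, fun _ => rfl⟩
    · -- D has length ≥ 3; peel off the last vertex
      have hne : D ≠ [] := by intro h; rw [h] at h2; simp at h2
      set w := D.getLast hne with hw
      set D₀ := D.dropLast with hD₀def
      have hDw : D₀ ++ [w] = D := List.dropLast_append_getLast hne
      have hlen₀ : D₀.length = D.length - 1 := by simp [hD₀def]
      have h2₀ : 2 ≤ D₀.length := by omega
      have hne₀ : D₀ ≠ [] := by intro h; rw [h] at hlen₀; simp at hlen₀; omega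
      set u := D₀.getLast hne₀ with hu
      set D₁ := D₀.dropLast with hD₁def
      have hDu : D₁ ++ [u] = D₀ := List.dropLast_append_getLast hne₀
      have hDsplit : D = D₁ ++ u :: [w] := by
        rw [← hDw, ← hDu]; simp
      have hedges : pathEdges D = pathEdges D₀ ++ [(u, w)] := by
        rw [hDsplit, pathEdges_split, hDu]
        rfl
      have hD₀path : IsPathOn E D₀ := by
        refine ⟨hne₀, hD.2.1.prefix ⟨[w], hDw⟩, hD.2.2.sublist ?_⟩
        exact List.IsPrefix.sublist ⟨[w], hDw⟩
      obtain ⟨P₁, hP₁, hcard₁, ⟨p, hpP₁, hDp⟩, hmult₁⟩ :=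
        ih D₀ (by omega) h2₀ hD₀path P hP
          (fun e he => hDP e (by rw [hedges]; exact List.mem_append_left _ he))
      have huw : (u, w) ∈ pathEdges D := by rw [hedges]; simp
      have hmultpos : 0 < mult P₁ (u, w) := by
        rw [hmult₁]
        exact Multiset.countP_pos.2 (hDP _ huw)
      obtain ⟨q, hqP₁, hq_uw⟩ := Multiset.countP_pos.1 hmultpos
      obtain ⟨a, b, hab⟩ := hDp
      have hppath : IsPathOn E p := hP₁.1 p hpP₁
      by_cases hpuw : (u, w) ∈ pathEdges p
      · -- D already a subpath of p
        obtain ⟨l, r, hlr⟩ := mem_pathEdges_iff.1 hpuw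
        have hdec2 : (a ++ D₁) ++ u :: b = l ++ u :: (w :: r) := by
          rw [← hlr, ← hab, ← hDu]; simp
        have hnd : ((a ++ D₁) ++ u :: b).Nodup := by
          rw [hdec2, ← hlr]; exact hppath.2.2
        obtain ⟨-, hbr⟩ := nodup_split_unique hnd hdec2
        refine ⟨P₁, hP₁, hcard₁, ⟨p, hpP₁, ⟨a, r, ?_⟩⟩, hmult₁⟩
        rw [← hab, ← hDw, hbr]
        simp
      · -- splice p and q
        have hqp_ne : q ≠ p := fun h => hpuw (h ▸ hq_uw)
        have hqmem : q ∈ P₁.erase p := (Multiset.mem_erase_of_ne hqp_ne).2 hqP₁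
        set R := (P₁.erase p).erase q with hR
        have hP₁eq : P₁ = p ::ₘ q ::ₘ R := by
          rw [hR, Multiset.cons_erase hqmem, Multiset.cons_erase hpP₁]
        obtain ⟨c, d, hcd⟩ := mem_pathEdges_iff.1 hq_uw
        have hp_eq : p = a ++ (D₁ ++ [u]) ++ b := by rw [hDu, ← hab]
        have hqpath : IsPathOn E q := hP₁.1 q hqP₁
        obtain ⟨hp', hq', hperm, hvert⟩ :=
          splice (E := E) hdag a D₁ b c d u w (hp_eq ▸ hppath) (hcd ▸ hqpath)
        set p' := a ++ (D₁ ++ [u]) ++ w :: d with hp'def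
        set q' := c ++ u :: b with hq'def
        refine ⟨p' ::ₘ q' ::ₘ R, ⟨?_, ?_⟩, ?_, ⟨p', by simp, ⟨a, d, ?_⟩⟩, ?_⟩
        · intro r hr
          rcases Multiset.mem_cons.1 hr with rfl | hr
          · exact hp'
          rcases Multiset.mem_cons.1 hr with rfl | hr
          · exact hq'
          · exact hP₁.1 r (by rw [hP₁eq]; exact Multiset.mem_cons_of_mem (Multiset.mem_cons_of_mem hr))
        · intro v
          obtain ⟨r, hrP₁, hvr⟩ := hP₁.2 v
          rw [hP₁eq] at hrP₁
          rcases Multiset.mem_cons.1 hrP₁ with rfl | hr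
          · rw [hp_eq] at hvr
            rcases (hvert v).2 (Or.inl hvr) with h | h
            · exact ⟨p', by simp, h⟩
            · exact ⟨q', by simp, h⟩
          rcases Multiset.mem_cons.1 hr with rfl | hr
          · rw [hcd] at hvr
            rcases (hvert v).2 (Or.inr hvr) with h | h
            · exact ⟨p', by simp, h⟩
            · exact ⟨q', by simp, h⟩
          · exact ⟨r, by simp [Multiset.mem_cons_of_mem hr], hvr⟩
        · rw [hP₁eq] at hcard₁
          simpa using hcard₁
        · rw [← hDw, ← hDu, hp'def]
          simp
        · intro e
          rw [← hmult₁, hP₁eq]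
          unfold mult
          rw [Multiset.countP_cons, Multiset.countP_cons, Multiset.countP_cons,
            Multiset.countP_cons]
          have hind := indicator_eq (nodup_pathEdges (hp_eq ▸ hppath.2.2))
            (nodup_pathEdges (hcd ▸ hqpath.2.2)) (nodup_pathEdges hp'.2.2)
            (nodup_pathEdges hq'.2.2) hperm e
          rw [hp_eq, hcd]
          linarith [hind]

end Stmt11Aux

end Aux

/-- splicing: given a proper path `D` each of whose edges lies on some
path of a path cover `𝒫`, there is a path cover of the same size, with the same edge
multiplicities, one of whose paths contains `D` as a subpath. -/
theorem stmt_11 {V : Type*} [DecidableEq V] (E : V → V → Prop) (hdag : IsDAG E)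
    (D : List V) (hDpath : IsPathOn E D) (hDproper : 2 ≤ D.length)
    (P : Multiset (List V)) (hP : IsPathCover E P)
    (hDP : ∀ e ∈ pathEdges D, ∃ p ∈ P, e ∈ pathEdges p) :
    ∃ P' : Multiset (List V), IsPathCover E P' ∧ Multiset.card P' = Multiset.card P ∧
      (∃ p ∈ P', D <:+: p) ∧ ∀ e : V × V, mult P' e = mult P e := by
  exact Stmt11Aux.main_aux E hdag D.length D le_rfl hDproper hDpath P hP hDP
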